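/- Let 𝒱 ⊂ ℝⁿ be an open bounded convex set, let f : closure(𝒱) → ℝⁿ be of class C², let η : closure(𝒱) → ℝ be of class C² with positive-definite Hessian at every point of closure(𝒱), and let q : closure(𝒱) → ℝ be of class C² with ∇q(u) = Df(u)ᵀ·∇η(u) for all u ∈ 𝒱. Let W be a compact subset of 𝒱. Then there exists a finite speed of information s > 0 such that |q(a;b)| ≤ s·η(a|b) for all a ∈ 𝒱 and b ∈ W, where η(a|b) := η(a) − η(b) − ∇η(b)·(a − b) and q(a;b) := q(a) − q(b) − ∇η(b)·(f(a) − f(b)). -/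

import Mathlib

open MeasureTheory Filter
open scoped RealInnerProductSpace

noncomputable section

/-- Relative entropy `η(a|b) = η(a) - η(b) - ∇η(b)·(a-b)`. -/
def relEnt {n : ℕ} (η : EuclideanSpace ℝ (Fin n) → ℝ) (a b : EuclideanSpace ℝ (Fin n)) : ℝ :=
  η a - η b - ⟪gradient η b, a - b⟫

/-- Relative entropy flux `q(a;b) = q(a) - q(b) - ∇η(b)·(f(a)-f(b))`. -/
def relFlux {n : ℕ} (f : EuclideanSpace ℝ (Fin n) → EuclideanSpace ℝ (Fin n))
    (η q : EuclideanSpace ℝ (Fin n) → ℝ) (a b : EuclideanSpace ℝ (Fin n)) : ℝ :=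
  q a - q b - ⟪gradient η b, f a - f b⟫

section Aux

open Set

variable {E F G : Type*} [NormedAddCommGroup E] [NormedSpace ℝ E]
  [NormedAddCommGroup F] [NormedSpace ℝ F] [NormedAddCommGroup G] [NormedSpace ℝ G]

lemma aux_iter_eq {𝒱 : Set E} (h𝒱o : IsOpen 𝒱) (g : E → F) (m : ℕ) {x : E} (hx : x ∈ 𝒱) :
    iteratedFDerivWithin ℝ m g (closure 𝒱) x = iteratedFDeriv ℝ m g x := by
  rw [← iteratedFDerivWithin_inter (h𝒱o.mem_nhds hx),
    Set.inter_eq_self_of_subset_right subset_closure]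
  exact iteratedFDerivWithin_of_isOpen m h𝒱o hx

lemma aux_second_eq (g : E → F) (x : E) (v : E) :
    fderiv ℝ (fderiv ℝ g) x v v = iteratedFDeriv ℝ 2 g x ![v, v] := by
  rw [iteratedFDeriv_two_apply]
  simp

lemma aux_second_bound (g : E → F) (x : E) (v : E) :
    ‖fderiv ℝ (fderiv ℝ g) x v v‖ ≤ ‖iteratedFDeriv ℝ 2 g x‖ * (‖v‖ * ‖v‖) := by
  rw [aux_second_eq]
  have h := (iteratedFDeriv ℝ 2 g x).le_opNorm ![v, v]
  simpa [Fin.prod_univ_two] using h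

lemma aux_diffs {g : E → F} {x : E} (h : ContDiffAt ℝ 2 g x) :
    DifferentiableAt ℝ g x ∧ DifferentiableAt ℝ (fderiv ℝ g) x :=
  ⟨h.differentiableAt two_ne_zero,
    ((h.fderiv_right (by norm_num)) : ContDiffAt ℝ 1 (fderiv ℝ g) x).differentiableAt one_ne_zero⟩

lemma aux_line_hasDerivAt {g : E → F} (b v : E) {t : ℝ}
    (h1 : DifferentiableAt ℝ g (b + t • v)) :
    HasDerivAt (fun s : ℝ => g (b + s • v)) (fderiv ℝ g (b + t • v) v) t := by
  have hl : HasDerivAt (fun s : ℝ => b + s • v) v t := by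
    simpa using ((hasDerivAt_id t).smul_const v).const_add b
  exact h1.hasFDerivAt.comp_hasDerivAt t hl

lemma aux_line_hasDerivAt2 {g : E → F}
    (A : (E →L[ℝ] F) →L[ℝ] G) (b v : E) {t : ℝ}
    (h2 : DifferentiableAt ℝ (fderiv ℝ g) (b + t • v)) :
    HasDerivAt (fun s : ℝ => A (fderiv ℝ g (b + s • v)))
      (A (fderiv ℝ (fderiv ℝ g) (b + t • v) v)) t := by
  have hl : HasDerivAt (fun s : ℝ => b + s • v) v t := by
    simpa using ((hasDerivAt_id t).smul_const v).const_add b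
  have h3 : HasFDerivAt (fun y => A (fderiv ℝ g y))
      (A.comp (fderiv ℝ (fderiv ℝ g) (b + t • v))) (b + t • v) :=
    A.hasFDerivAt.comp _ h2.hasFDerivAt
  simpa [Function.comp_def] using h3.comp_hasDerivAt t hl

end Aux

lemma aux_gradient_inner {E : Type*} [NormedAddCommGroup E] [InnerProductSpace ℝ E]
    [CompleteSpace E] (g : E → ℝ) (x y : E) :
    ⟪gradient g x, y⟫ = fderiv ℝ g x y := by
  simp [gradient, InnerProductSpace.toDual_symm_apply]

lemma aux_gradient_norm {E : Type*} [NormedAddCommGroup E] [InnerProductSpace ℝ E]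
    [CompleteSpace E] (g : E → ℝ) (x : E) :
    ‖gradient g x‖ = ‖fderiv ℝ g x‖ := by
  simp [gradient]

set_option maxHeartbeats 1600000 in
/-- Existence of a finite speed of information: `|q(a;b)| ≤ s·η(a|b)`
for all `a ∈ 𝒱` and `b` in a compact subset `W ⊆ 𝒱`. -/
theorem stmt9 (n : ℕ) (𝒱 : Set (EuclideanSpace ℝ (Fin n)))
    (h𝒱o : IsOpen 𝒱) (h𝒱b : Bornology.IsBounded 𝒱) (h𝒱c : Convex ℝ 𝒱)
    (f : EuclideanSpace ℝ (Fin n) → EuclideanSpace ℝ (Fin n))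
    (η q : EuclideanSpace ℝ (Fin n) → ℝ)
    (hf : ContDiffOn ℝ 2 f (closure 𝒱))
    (hη : ContDiffOn ℝ 2 η (closure 𝒱))
    (hHess : ∀ x ∈ closure 𝒱, ∀ h : EuclideanSpace ℝ (Fin n), h ≠ 0 →
      0 < iteratedFDerivWithin ℝ 2 η (closure 𝒱) x ![h, h])
    (hq : ContDiffOn ℝ 2 q (closure 𝒱))
    (hpair : ∀ u ∈ 𝒱, ∀ h : EuclideanSpace ℝ (Fin n),
      fderiv ℝ q u h = ⟪gradient η u, fderiv ℝ f u h⟫)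
    (W : Set (EuclideanSpace ℝ (Fin n))) (hWc : IsCompact W) (hW𝒱 : W ⊆ 𝒱) :
    ∃ s : ℝ, 0 < s ∧ ∀ a ∈ 𝒱, ∀ b ∈ W,
      |relFlux f η q a b| ≤ s * relEnt η a b := by
  classical
  rcases W.eq_empty_or_nonempty with hWe | ⟨b₀, hb₀⟩
  · exact ⟨1, one_pos, fun a _ b hb => absurd hb (by simp [hWe])⟩
  rcases subsingleton_or_nontrivial (EuclideanSpace ℝ (Fin n)) with hss | hnt
  · refine ⟨1, one_pos, fun a ha b hb => ?_⟩
    have hab : a = b := Subsingleton.elim a b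
    subst hab
    simp [relFlux, relEnt]
  have hb₀V : b₀ ∈ 𝒱 := hW𝒱 hb₀
  have hsubK : 𝒱 ⊆ closure 𝒱 := subset_closure
  have hKc : IsCompact (closure 𝒱) := h𝒱b.isCompact_closure
  have hKu : UniqueDiffOn ℝ (closure 𝒱) :=
    uniqueDiffOn_convex h𝒱c.closure ⟨b₀, (h𝒱o.subset_interior_iff.mpr hsubK) hb₀V⟩
  have hnhds : ∀ x ∈ 𝒱, closure 𝒱 ∈ nhds x := fun x hx =>
    mem_nhds_iff.mpr ⟨𝒱, hsubK, h𝒱o, hx⟩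
  have hηd := fun x (hx : x ∈ 𝒱) => aux_diffs (hη.contDiffAt (hnhds x hx))
  have hqd := fun x (hx : x ∈ 𝒱) => aux_diffs (hq.contDiffAt (hnhds x hx))
  have hfd := fun x (hx : x ∈ 𝒱) => aux_diffs (hf.contDiffAt (hnhds x hx))
  -- bounds on the second derivatives of q and f
  obtain ⟨M1, hM1⟩ := hKc.exists_bound_of_continuousOn
    (hq.continuousOn_iteratedFDerivWithin (m := 2) (by norm_num) hKu)
  obtain ⟨M2, hM2⟩ := hKc.exists_bound_of_continuousOn
    (hf.continuousOn_iteratedFDerivWithin (m := 2) (by norm_num) hKu)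
  have hM1' : ∀ x ∈ 𝒱, ‖iteratedFDeriv ℝ 2 q x‖ ≤ M1 := fun x hx => by
    rw [← aux_iter_eq h𝒱o q 2 hx]; exact hM1 x (hsubK hx)
  have hM2' : ∀ x ∈ 𝒱, ‖iteratedFDeriv ℝ 2 f x‖ ≤ M2 := fun x hx => by
    rw [← aux_iter_eq h𝒱o f 2 hx]; exact hM2 x (hsubK hx)
  have hM1nn : 0 ≤ M1 := le_trans (norm_nonneg _) (hM1' b₀ hb₀V)
  have hM2nn : 0 ≤ M2 := le_trans (norm_nonneg _) (hM2' b₀ hb₀V)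
  -- bound on the gradient of η on W
  have hgradcont : ContinuousOn (fderiv ℝ η) 𝒱 :=
    (hη.mono hsubK).continuousOn_fderiv_of_isOpen h𝒱o (by norm_num)
  obtain ⟨M3, hM3⟩ := hWc.exists_bound_of_continuousOn (hgradcont.mono hW𝒱)
  have hM3' : ∀ b ∈ W, ‖gradient η b‖ ≤ M3 := fun b hb => by
    rw [aux_gradient_norm]; exact hM3 b hb
  have hM3nn : 0 ≤ M3 := le_trans (norm_nonneg _) (hM3' b₀ hb₀)
  -- minimum of the Hessian quadratic form on (closure 𝒱) × sphere
  have hIter : ContinuousOn (iteratedFDerivWithin ℝ 2 η (closure 𝒱)) (closure 𝒱) :=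
    hη.continuousOn_iteratedFDerivWithin (by norm_num) hKu
  have hpairc : Continuous (fun p : EuclideanSpace ℝ (Fin n) × EuclideanSpace ℝ (Fin n) =>
      (![p.2, p.2] : Fin 2 → EuclideanSpace ℝ (Fin n))) :=
    continuous_pi fun i => by fin_cases i <;> simpa using continuous_snd
  have hΦ : ContinuousOn
      (fun p : EuclideanSpace ℝ (Fin n) × EuclideanSpace ℝ (Fin n) =>
        iteratedFDerivWithin ℝ 2 η (closure 𝒱) p.1 ![p.2, p.2])
      ((closure 𝒱) ×ˢ Metric.sphere 0 1) := by
    exact continuous_eval.comp_continuousOn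
      ((hIter.comp continuousOn_fst (fun p hp => hp.1)).prodMk hpairc.continuousOn)
  obtain ⟨u₀, hu₀⟩ : (Metric.sphere (0 : EuclideanSpace ℝ (Fin n)) 1).Nonempty :=
    NormedSpace.sphere_nonempty.mpr zero_le_one
  obtain ⟨p₀, hp₀S, hp₀min⟩ := (hKc.prod (isCompact_sphere 0 1)).exists_isMinOn
    ⟨(b₀, u₀), ⟨hsubK hb₀V, hu₀⟩⟩ hΦ
  set c : ℝ := iteratedFDerivWithin ℝ 2 η (closure 𝒱) p₀.1 ![p₀.2, p₀.2] with hcdef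
  have hp₀norm : ‖p₀.2‖ = 1 := by
    have := hp₀S.2; rwa [Metric.mem_sphere, dist_zero_right] at this
  have hc : 0 < c := by
    refine hHess p₀.1 hp₀S.1 p₀.2 ?_
    intro h0
    rw [h0, norm_zero] at hp₀norm
    norm_num at hp₀norm
  have hquad : ∀ x ∈ closure 𝒱, ∀ v : EuclideanSpace ℝ (Fin n),
      c * ‖v‖ ^ 2 ≤ iteratedFDerivWithin ℝ 2 η (closure 𝒱) x ![v, v] := by
    intro x hx v
    rcases eq_or_ne v 0 with rfl | hv
    · have h0 : (iteratedFDerivWithin ℝ 2 η (closure 𝒱) x) ![0, 0] = 0 :=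
        (iteratedFDerivWithin ℝ 2 η (closure 𝒱) x).map_coord_zero 0 (by simp)
      simp [h0]
    · set u : EuclideanSpace ℝ (Fin n) := ‖v‖⁻¹ • v with hu
      have hun : ‖u‖ = 1 := norm_smul_inv_norm hv
      have hmin : c ≤ iteratedFDerivWithin ℝ 2 η (closure 𝒱) x ![u, u] :=
        isMinOn_iff.mp hp₀min (x, u) ⟨hx, by simpa [Metric.mem_sphere, dist_zero_right] using hun⟩
      have hvu : (![v, v] : Fin 2 → EuclideanSpace ℝ (Fin n)) =
          fun i => ‖v‖ • (![u, u] i) := by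
        funext i
        have : ‖v‖ • u = v := by
          rw [hu, smul_smul, mul_inv_cancel₀ (norm_ne_zero_iff.mpr hv), one_smul]
        fin_cases i <;> simp [this]
      have hsmul : iteratedFDerivWithin ℝ 2 η (closure 𝒱) x ![v, v] =
          (‖v‖ * ‖v‖) * iteratedFDerivWithin ℝ 2 η (closure 𝒱) x ![u, u] := by
        rw [hvu]
        have := (iteratedFDerivWithin ℝ 2 η (closure 𝒱) x).map_smul_univ
          (fun _ : Fin 2 => ‖v‖) ![u, u]
        rw [this, Fin.prod_univ_two, smul_eq_mul]
      rw [hsmul]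
      have hnn : (0:ℝ) ≤ ‖v‖ * ‖v‖ := mul_nonneg (norm_nonneg _) (norm_nonneg _)
      nlinarith [mul_le_mul_of_nonneg_left hmin hnn]
  have hquad' : ∀ x ∈ 𝒱, ∀ v : EuclideanSpace ℝ (Fin n),
      c * ‖v‖ ^ 2 ≤ fderiv ℝ (fderiv ℝ η) x v v := fun x hx v => by
    rw [aux_second_eq, ← aux_iter_eq h𝒱o η 2 hx]
    exact hquad x (hsubK hx) v
  -- second derivative bounds at points of 𝒱
  have hqb : ∀ x ∈ 𝒱, ∀ v : EuclideanSpace ℝ (Fin n),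
      |fderiv ℝ (fderiv ℝ q) x v v| ≤ M1 * (‖v‖ * ‖v‖) := fun x hx v => by
    rw [← Real.norm_eq_abs]
    exact le_trans (aux_second_bound q x v)
      (mul_le_mul_of_nonneg_right (hM1' x hx) (mul_nonneg (norm_nonneg _) (norm_nonneg _)))
  have hfb : ∀ x ∈ 𝒱, ∀ v : EuclideanSpace ℝ (Fin n),
      ‖fderiv ℝ (fderiv ℝ f) x v v‖ ≤ M2 * (‖v‖ * ‖v‖) := fun x hx v =>
    le_trans (aux_second_bound f x v)
      (mul_le_mul_of_nonneg_right (hM2' x hx) (mul_nonneg (norm_nonneg _) (norm_nonneg _)))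
  -- the speed
  set Cb : ℝ := M1 + M3 * M2 with hCbdef
  have hCbnn : 0 ≤ Cb := by positivity
  set s : ℝ := (2 * Cb + c) / c with hsdef
  have hspos : 0 < s := div_pos (by linarith) hc
  have hkey : s * (c / 2) = Cb + c / 2 := by
    rw [hsdef]; field_simp
  refine ⟨s, hspos, ?_⟩
  intro a ha b hb
  have hbV : b ∈ 𝒱 := hW𝒱 hb
  set v : EuclideanSpace ℝ (Fin n) := a - b with hv
  have hLmem : ∀ t ∈ Set.Icc (0:ℝ) 1, b + t • v ∈ 𝒱 := by
    intro t ht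
    have hmem := h𝒱c hbV ha (by linarith [ht.2] : (0:ℝ) ≤ 1 - t) ht.1 (by ring)
    have heq : b + t • v = (1 - t) • b + t • a := by
      rw [hv]; simp [smul_sub, sub_smul, one_smul]; abel
    rwa [heq]
  have hb0 : b + (0:ℝ) • v = b := by simp
  have hb1 : b + (1:ℝ) • v = a := by simp [hv]
  -- derivative facts for η along the segment
  have hηd1 : ∀ t ∈ Set.Icc (0:ℝ) 1, HasDerivAt (fun s : ℝ => η (b + s • v))
      (fderiv ℝ η (b + t • v) v) t := fun t ht =>
    aux_line_hasDerivAt b v (hηd _ (hLmem t ht)).1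
  have hηd2 : ∀ t ∈ Set.Icc (0:ℝ) 1, HasDerivAt (fun s : ℝ => fderiv ℝ η (b + s • v) v)
      (fderiv ℝ (fderiv ℝ η) (b + t • v) v v) t := fun t ht => by
    simpa using aux_line_hasDerivAt2 (ContinuousLinearMap.apply ℝ ℝ v) b v
      (hηd _ (hLmem t ht)).2
  -- lower bound for the relative entropy
  have hlow : c / 2 * ‖v‖ ^ 2 ≤ relEnt η a b := by
    have hψd : ∀ t ∈ Set.Icc (0:ℝ) 1, HasDerivAt
        (fun s : ℝ => fderiv ℝ η (b + s • v) v - (fderiv ℝ η b v + c * ‖v‖ ^ 2 * s))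
        (fderiv ℝ (fderiv ℝ η) (b + t • v) v v - c * ‖v‖ ^ 2) t := by
      intro t ht
      have h2 : HasDerivAt (fun s : ℝ => fderiv ℝ η b v + c * ‖v‖ ^ 2 * s)
          (c * ‖v‖ ^ 2) t := by
        simpa using ((hasDerivAt_id t).const_mul (c * ‖v‖ ^ 2)).const_add (fderiv ℝ η b v)
      exact (hηd2 t ht).sub h2
    have hψmono : MonotoneOn
        (fun s : ℝ => fderiv ℝ η (b + s • v) v - (fderiv ℝ η b v + c * ‖v‖ ^ 2 * s))
        (Set.Icc 0 1) := by
      refine monotoneOn_of_deriv_nonneg (convex_Icc 0 1)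
        (fun t ht => (hψd t ht).continuousAt.continuousWithinAt)
        (fun t ht => by
          rw [interior_Icc] at ht
          exact (hψd t (Set.Ioo_subset_Icc_self ht)).differentiableAt.differentiableWithinAt)
        (fun t ht => ?_)
      rw [interior_Icc] at ht
      rw [(hψd t (Set.Ioo_subset_Icc_self ht)).deriv]
      have := hquad' _ (hLmem t (Set.Ioo_subset_Icc_self ht)) v
      linarith
    have hψ0 : ∀ t ∈ Set.Icc (0:ℝ) 1,
        fderiv ℝ η b v + c * ‖v‖ ^ 2 * t ≤ fderiv ℝ η (b + t • v) v := by
      intro t ht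
      have h := hψmono (Set.left_mem_Icc.mpr zero_le_one) ht ht.1
      simp only [hb0, mul_zero, add_zero, sub_self] at h
      linarith [h]
    have hφd : ∀ t ∈ Set.Icc (0:ℝ) 1, HasDerivAt
        (fun s : ℝ => η (b + s • v) -
          (η b + fderiv ℝ η b v * s + c / 2 * ‖v‖ ^ 2 * s ^ 2))
        (fderiv ℝ η (b + t • v) v - (fderiv ℝ η b v + c * ‖v‖ ^ 2 * t)) t := by
      intro t ht
      have ha1 : HasDerivAt (fun s : ℝ => fderiv ℝ η b v * s) (fderiv ℝ η b v) t := by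
        simpa using (hasDerivAt_id t).const_mul (fderiv ℝ η b v)
      have hb2 : HasDerivAt (fun s : ℝ => c / 2 * ‖v‖ ^ 2 * s ^ 2) (c * ‖v‖ ^ 2 * t) t := by
        have := (hasDerivAt_pow 2 t).const_mul (c / 2 * ‖v‖ ^ 2)
        refine this.congr_deriv ?_
        norm_num; ring
      have h2 : HasDerivAt
          (fun s : ℝ => η b + fderiv ℝ η b v * s + c / 2 * ‖v‖ ^ 2 * s ^ 2)
          (fderiv ℝ η b v + c * ‖v‖ ^ 2 * t) t :=
        (ha1.const_add (η b)).add hb2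
      exact (hηd1 t ht).sub h2
    have hφmono : MonotoneOn
        (fun s : ℝ => η (b + s • v) -
          (η b + fderiv ℝ η b v * s + c / 2 * ‖v‖ ^ 2 * s ^ 2))
        (Set.Icc 0 1) := by
      refine monotoneOn_of_deriv_nonneg (convex_Icc 0 1)
        (fun t ht => (hφd t ht).continuousAt.continuousWithinAt)
        (fun t ht => by
          rw [interior_Icc] at ht
          exact (hφd t (Set.Ioo_subset_Icc_self ht)).differentiableAt.differentiableWithinAt)
        (fun t ht => ?_)
      rw [interior_Icc] at ht
      rw [(hφd t (Set.Ioo_subset_Icc_self ht)).deriv]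
      have := hψ0 t (Set.Ioo_subset_Icc_self ht)
      linarith
    have hφ01 := hφmono (Set.left_mem_Icc.mpr zero_le_one)
      (Set.right_mem_Icc.mpr zero_le_one) zero_le_one
    simp only [hb0, hb1, mul_zero, mul_one, add_zero, sub_self, one_pow] at hφ01
    have hgrad : ⟪gradient η b, a - b⟫ = fderiv ℝ η b (a - b) := aux_gradient_inner η b (a - b)
    have hzero : (0:ℝ) ^ 2 = 0 := by norm_num
    rw [hzero, mul_zero, add_zero, sub_self] at hφ01
    rw [relEnt, hgrad, ← hv]
    linarith [hφ01]
  have hRnn : 0 ≤ relEnt η a b := le_trans (by positivity) hlow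
  -- upper bound for the relative entropy flux
  have hr1 : ∀ t ∈ Set.Icc (0:ℝ) 1, HasDerivAt
      (fun s : ℝ => q (b + s • v) - ⟪gradient η b, f (b + s • v)⟫)
      (fderiv ℝ q (b + t • v) v - ⟪gradient η b, fderiv ℝ f (b + t • v) v⟫) t := by
    intro t ht
    have h1 := aux_line_hasDerivAt b v (hqd _ (hLmem t ht)).1
    have h2 := aux_line_hasDerivAt b v (hfd _ (hLmem t ht)).1
    have h3 : HasDerivAt (fun s : ℝ => ⟪gradient η b, f (b + s • v)⟫)
        (⟪gradient η b, fderiv ℝ f (b + t • v) v⟫) t := by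
      simpa [Function.comp_def] using (innerSL ℝ (gradient η b)).hasFDerivAt.comp_hasDerivAt t h2
    exact h1.sub h3
  have hr2 : ∀ t ∈ Set.Icc (0:ℝ) 1, HasDerivAt
      (fun s : ℝ => fderiv ℝ q (b + s • v) v - ⟪gradient η b, fderiv ℝ f (b + s • v) v⟫)
      (fderiv ℝ (fderiv ℝ q) (b + t • v) v v -
        ⟪gradient η b, fderiv ℝ (fderiv ℝ f) (b + t • v) v v⟫) t := by
    intro t ht
    have h1 : HasDerivAt (fun s : ℝ => fderiv ℝ q (b + s • v) v)
        (fderiv ℝ (fderiv ℝ q) (b + t • v) v v) t := by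
      simpa using aux_line_hasDerivAt2 (ContinuousLinearMap.apply ℝ ℝ v) b v
        (hqd _ (hLmem t ht)).2
    have h2 : HasDerivAt (fun s : ℝ => ⟪gradient η b, fderiv ℝ f (b + s • v) v⟫)
        (⟪gradient η b, fderiv ℝ (fderiv ℝ f) (b + t • v) v v⟫) t := by
      simpa using aux_line_hasDerivAt2
        ((innerSL ℝ (gradient η b)).comp
          (ContinuousLinearMap.apply ℝ (EuclideanSpace ℝ (Fin n)) v)) b v
        (hfd _ (hLmem t ht)).2
    exact h1.sub h2
  have hr1_0 : fderiv ℝ q (b + (0:ℝ) • v) v - ⟪gradient η b, fderiv ℝ f (b + (0:ℝ) • v) v⟫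
      = 0 := by
    rw [hb0, hpair b hbV v, sub_self]
  have hbound2 : ∀ t ∈ Set.Icc (0:ℝ) 1,
      |fderiv ℝ (fderiv ℝ q) (b + t • v) v v -
        ⟪gradient η b, fderiv ℝ (fderiv ℝ f) (b + t • v) v v⟫| ≤ Cb * ‖v‖ ^ 2 := by
    intro t ht
    have h1 := hqb _ (hLmem t ht) v
    have h2 := hfb _ (hLmem t ht) v
    have h3 : |⟪gradient η b, fderiv ℝ (fderiv ℝ f) (b + t • v) v v⟫| ≤
        M3 * (M2 * (‖v‖ * ‖v‖)) := by
      refine le_trans (abs_real_inner_le_norm _ _) ?_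
      exact mul_le_mul (hM3' b hb) h2 (norm_nonneg _) hM3nn
    have h4 : |fderiv ℝ (fderiv ℝ q) (b + t • v) v v -
        ⟪gradient η b, fderiv ℝ (fderiv ℝ f) (b + t • v) v v⟫| ≤
        |fderiv ℝ (fderiv ℝ q) (b + t • v) v v| +
        |⟪gradient η b, fderiv ℝ (fderiv ℝ f) (b + t • v) v v⟫| := by
      simpa [sub_eq_add_neg] using abs_add_le (fderiv ℝ (fderiv ℝ q) (b + t • v) v v)
        (-⟪gradient η b, fderiv ℝ (fderiv ℝ f) (b + t • v) v v⟫)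
    have hvv : ‖v‖ * ‖v‖ = ‖v‖ ^ 2 := by ring
    rw [hCbdef]
    nlinarith [h1, h3, h4]
  have hstepA : ∀ t ∈ Set.Icc (0:ℝ) 1,
      |fderiv ℝ q (b + t • v) v - ⟪gradient η b, fderiv ℝ f (b + t • v) v⟫| ≤ Cb * ‖v‖ ^ 2 := by
    intro t ht
    have h := norm_image_sub_le_of_norm_deriv_le_segment'
      (fun u hu => (hr2 u hu).hasDerivWithinAt)
      (fun u hu => by
        simpa [Real.norm_eq_abs] using hbound2 u (Set.Ico_subset_Icc_self hu)) t ht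
    rw [hr1_0, sub_zero] at h
    rw [← Real.norm_eq_abs]
    have hnn : (0:ℝ) ≤ Cb * ‖v‖ ^ 2 := by positivity
    nlinarith [h, ht.1, ht.2]
  have hstepB : ‖(q a - ⟪gradient η b, f a⟫) - (q b - ⟪gradient η b, f b⟫)‖ ≤ Cb * ‖v‖ ^ 2 := by
    have h := norm_image_sub_le_of_norm_deriv_le_segment_01'
      (fun u hu => (hr1 u hu).hasDerivWithinAt)
      (fun u hu => by
        simpa [Real.norm_eq_abs] using hstepA u (Set.Ico_subset_Icc_self hu))
    simp only [hb0, hb1] at h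
    exact h
  have hupp : |relFlux f η q a b| ≤ Cb * ‖v‖ ^ 2 := by
    have heq : relFlux f η q a b = (q a - ⟪gradient η b, f a⟫) - (q b - ⟪gradient η b, f b⟫) := by
      simp only [relFlux, inner_sub_right]
      ring
    rw [heq, ← Real.norm_eq_abs]
    exact hstepB
  -- conclusion
  have h1 : s * (c / 2 * ‖v‖ ^ 2) ≤ s * relEnt η a b :=
    mul_le_mul_of_nonneg_left hlow hspos.le
  have h2 : s * (c / 2 * ‖v‖ ^ 2) = Cb * ‖v‖ ^ 2 + c / 2 * ‖v‖ ^ 2 := by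
    rw [show s * (c / 2 * ‖v‖ ^ 2) = s * (c / 2) * ‖v‖ ^ 2 by ring, hkey]
    ring
  have h3 : (0:ℝ) ≤ c / 2 * ‖v‖ ^ 2 := by positivity
  calc |relFlux f η q a b| ≤ Cb * ‖v‖ ^ 2 := hupp
    _ ≤ Cb * ‖v‖ ^ 2 + c / 2 * ‖v‖ ^ 2 := by linarith
    _ = s * (c / 2 * ‖v‖ ^ 2) := h2.symm
    _ ≤ s * relEnt η a b := h1

end
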